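/- Let (p_t, P_T) be a drift process. Then (p_t, P_T) has proper drift if and only if (p_t, P_T) has model drift, i.e. if and only if there exist sets A, B ∈ ℬ with P_T(A) > 0, P_T(B) > 0 and p_A ≠ p_B. -/

import Mathlib

open MeasureTheory ProbabilityTheory

/-- A drift process has *no drift* if `p s = p t` for `(P_T × P_T)`-a.e. pair `(s, t)`. -/
def HasNoDrift {𝔗 𝔛 : Type*} [MeasurableSpace 𝔗] [MeasurableSpace 𝔛]
    (p : Kernel 𝔗 𝔛) (PT : Measure 𝔗) : Prop :=
  ∀ᵐ st ∂(PT.prod PT), p st.1 = p st.2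

/-- A drift process `(p_t, P_T)` has *no proper drift* if there exists a drift process
`(p'_t, P'_T)` with the same joint measure `p ⊗ P_T = p' ⊗ P'_T` that has no drift. -/
def HasNoProperDrift {𝔗 𝔛 : Type*} [MeasurableSpace 𝔗] [MeasurableSpace 𝔛]
    (p : Kernel 𝔗 𝔛) (PT : Measure 𝔗) : Prop :=
  ∃ (p' : Kernel 𝔗 𝔛) (PT' : Measure 𝔗), IsMarkovKernel p' ∧ IsProbabilityMeasure PT' ∧
    PT' ⊗ₘ p' = PT ⊗ₘ p ∧ HasNoDrift p' PT'

/-- The `𝔗`-invariant model of a drift process over a non-null set `A`: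
the probability measure `p_A(D) = P_T(A)⁻¹ ∫_A p_t(D) dP_T(t)`. -/
noncomputable def invariantModel {𝔗 𝔛 : Type*} [MeasurableSpace 𝔗] [MeasurableSpace 𝔛]
    (p : Kernel 𝔗 𝔛) (PT : Measure 𝔗) (A : Set 𝔗) : Measure 𝔛 :=
  (PT A)⁻¹ • (PT.restrict A).bind (fun t => p t)

lemma invariantModel_apply {𝔗 𝔛 : Type*} [MeasurableSpace 𝔗] [MeasurableSpace 𝔛]
    (p : Kernel 𝔗 𝔛) (PT : Measure 𝔗) (A : Set 𝔗) {D : Set 𝔛} (hD : MeasurableSet D) :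
    invariantModel p PT A D = (PT A)⁻¹ * ∫⁻ t in A, p t D ∂PT := by
  rw [invariantModel, Measure.smul_apply, Measure.bind_apply hD p.measurable.aemeasurable, smul_eq_mul]

/-- A drift process has proper drift iff it has model drift, i.e. iff there exist
measurable non-null sets `A, B` with `p_A ≠ p_B`. -/
theorem properDrift_iff_modelDrift {𝔗 𝔛 : Type*} [MeasurableSpace 𝔗] [MeasurableSpace 𝔛]
    (p : Kernel 𝔗 𝔛) [IsMarkovKernel p] (PT : Measure 𝔗) [IsProbabilityMeasure PT] :
    ¬ HasNoProperDrift p PT ↔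
      ∃ A B : Set 𝔗, MeasurableSet A ∧ MeasurableSet B ∧ 0 < PT A ∧ 0 < PT B ∧
        invariantModel p PT A ≠ invariantModel p PT B := by
  rw [not_iff_comm, not_exists]
  constructor
  · -- all invariant models agree → no proper drift
    intro h
    have h' : ∀ A B : Set 𝔗, MeasurableSet A → MeasurableSet B → 0 < PT A → 0 < PT B →
        invariantModel p PT A = invariantModel p PT B := by
      intro A B hA hB hApos hBpos
      by_contra hne
      exact h A ⟨B, hA, hB, hApos, hBpos, hne⟩
    set ν : Measure 𝔛 := PT.bind (fun t => p t) with hν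
    have hν_univ : invariantModel p PT Set.univ = ν := by
      simp [invariantModel, measure_univ, Measure.restrict_univ, hν]
    have hνprob : IsProbabilityMeasure ν := by
      constructor
      rw [hν, Measure.bind_apply MeasurableSet.univ p.measurable.aemeasurable]
      simp
    refine ⟨Kernel.const 𝔗 ν, PT, inferInstance, inferInstance, ?_, ?_⟩
    · rw [Measure.compProd_const]
      symm
      refine ext_of_generate_finite _ generateFrom_prod.symm isPiSystem_prod ?_ (by simp)
      rintro s ⟨s₁, hs₁, s₂, hs₂, rfl⟩
      rw [Measure.compProd_apply_prod hs₁ hs₂, Measure.prod_prod]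
      rcases eq_or_lt_of_le (zero_le : 0 ≤ PT s₁) with hzero | hpos
      · rw [setLIntegral_measure_zero s₁ _ hzero.symm, ← hzero, zero_mul]
      · have hne : PT s₁ ≠ 0 := hpos.ne'
        have htop : PT s₁ ≠ ⊤ := (measure_lt_top PT s₁).ne
        have h2 : invariantModel p PT s₁ s₂ = ν s₂ := by
          rw [h' s₁ Set.univ hs₁ MeasurableSet.univ hpos (by simp), hν_univ]
        rw [invariantModel_apply p PT s₁ hs₂] at h2
        rw [← h2, ← mul_assoc, ENNReal.mul_inv_cancel hne htop, one_mul]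
    · exact Filter.Eventually.of_forall fun st => by simp [Kernel.const_apply]
  · -- no proper drift → all invariant models agree
    rintro ⟨p', PT', hMarkov, hProb, hEq, hDrift⟩ A
    rw [not_exists]
    intro B
    push_neg
    intro hA hB hApos hBpos
    -- PT' = PT
    have hPT' : PT' = PT := by
      have h1 : (PT' ⊗ₘ p').fst = PT' := Measure.fst_compProd PT' p'
      have h2 : (PT ⊗ₘ p).fst = PT := Measure.fst_compProd PT p
      rw [← h1, hEq, h2]
    rw [hPT'] at hEq hDrift
    -- get a constant value ν of p' a.e.
    have hae : ∀ᵐ s ∂PT, ∀ᵐ t ∂PT, p' s = p' t := Measure.ae_ae_of_ae_prod hDrift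
    obtain ⟨s₀, hs₀⟩ := hae.exists
    set ν : Measure 𝔛 := p' s₀ with hν
    have hconst : p' =ᵐ[PT] Kernel.const 𝔗 ν := by
      filter_upwards [hs₀] with t ht using by simp [Kernel.const_apply, ← ht]
    have hprod : PT ⊗ₘ p = PT.prod ν := by
      rw [← hEq, Measure.compProd_congr hconst, Measure.compProd_const]
    -- every invariant model equals ν
    have key : ∀ C : Set 𝔗, MeasurableSet C → 0 < PT C → invariantModel p PT C = ν := by
      intro C hC hCpos
      have hCne : PT C ≠ 0 := hCpos.ne'
      have hCtop : PT C ≠ ⊤ := (measure_lt_top PT C).ne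
      ext D hD
      have h1 : ∫⁻ t in C, p t D ∂PT = (PT ⊗ₘ p) (C ×ˢ D) :=
        (Measure.compProd_apply_prod hC hD).symm
      rw [invariantModel_apply p PT C hD, h1, hprod, Measure.prod_prod, ← mul_assoc,
        ENNReal.inv_mul_cancel hCne hCtop, one_mul]
    rw [key A hA hApos, key B hB hBpos]
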